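/- Maschke's octic polynomial F := x₀⁸+x₁⁸+x₂⁸+x₃⁸ + 14(Σ_{i<j} x_i⁴x_j⁴) + 168 x₀²x₁²x₂²x₃² is invariant under the group G: for every g in the subgroup of GL(4,ℂ) generated by g₁ and g₂ and every v ∈ ℂ⁴, F(g·v) = F(v). -/

import Mathlib

/- Maschke's octic polynomial `F` is invariant under the group `G` generated by
`g₁` and `g₂`: for every `g ∈ G` and `v ∈ ℂ⁴`, `F(g·v) = F(v)`. -/

/-- Maschke's octic polynomial, as a function on `ℂ⁴`. -/
def F (x : Fin 4 → ℂ) : ℂ :=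
  x 0 ^ 8 + x 1 ^ 8 + x 2 ^ 8 + x 3 ^ 8 +
    14 * (x 0 ^ 4 * x 1 ^ 4 + x 0 ^ 4 * x 2 ^ 4 + x 0 ^ 4 * x 3 ^ 4 +
          x 1 ^ 4 * x 2 ^ 4 + x 1 ^ 4 * x 3 ^ 4 + x 2 ^ 4 * x 3 ^ 4) +
    168 * (x 0 ^ 2 * x 1 ^ 2 * x 2 ^ 2 * x 3 ^ 2)

/-- The matrix of `g₁`. -/
noncomputable def M1 : Matrix (Fin 4) (Fin 4) ℂ :=
  !![1, 0, 0, 0;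
     0, 1, 0, 0;
     0, 0, Complex.I, 0;
     0, 0, 0, Complex.I]

/-- The matrix of `g₂`. -/
noncomputable def M2 : Matrix (Fin 4) (Fin 4) ℂ :=
  (1/2 : ℂ) • !![-1, -Complex.I, -Complex.I, -1;
                 Complex.I, 1, -1, -Complex.I;
                 Complex.I, -1, 1, -Complex.I;
                 1, -Complex.I, -Complex.I, 1]

/-- `g₁ = diag(1,1,i,i)` as an element of `GL(4,ℂ)`. -/
noncomputable def g1 : GL (Fin 4) ℂ :=
  Matrix.GeneralLinearGroup.mkOfDetNeZero M1 (by
    simp [M1, Matrix.det_succ_row_zero, Fin.sum_univ_succ])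

/-- `g₂ = (1/2)·[[−1,−i,−i,−1],[i,1,−1,−i],[i,−1,1,−i],[1,−i,−i,1]]` as an element of
`GL(4,ℂ)`. -/
noncomputable def g2 : GL (Fin 4) ℂ :=
  Matrix.GeneralLinearGroup.mkOfDetNeZero M2 (by
    simp [M2, Matrix.det_succ_row_zero, Fin.sum_univ_succ, Fin.succAbove]
    ring_nf
    norm_num [Complex.ext_iff])

private lemma key1 (i a b c d : ℂ) (h : i^2 = -1) :
    (a)^8 + (b)^8 + (i * c)^8 + (i * d)^8 + 14*((a)^4*(b)^4 + (a)^4*(i * c)^4 + (a)^4*(i * d)^4 + (b)^4*(i * c)^4 + (b)^4*(i * d)^4 + (i * c)^4*(i * d)^4) + 168*((a)^2*(b)^2*(i * c)^2*(i * d)^2) = (a)^8 + (b)^8 + (c)^8 + (d)^8 + 14*((a)^4*(b)^4 + (a)^4*(c)^4 + (a)^4*(d)^4 + (b)^4*(c)^4 + (b)^4*(d)^4 + (c)^4*(d)^4) + 168*((a)^2*(b)^2*(c)^2*(d)^2) := by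
  linear_combination ((-1)*d^8 + (-14)*c^4*d^4 + (-1)*c^8 + (-14)*b^4*d^4 + (-14)*b^4*c^4 + (-168)*a^2*b^2*c^2*d^2 + (-14)*a^4*d^4 + (-14)*a^4*c^4 + i^2*d^8 + (14)*i^2*c^4*d^4 + i^2*c^8 + (14)*i^2*b^4*d^4 + (14)*i^2*b^4*c^4 + (168)*i^2*a^2*b^2*c^2*d^2 + (14)*i^2*a^4*d^4 + (14)*i^2*a^4*c^4 + (-1)*i^4*d^8 + (-14)*i^4*c^4*d^4 + (-1)*i^4*c^8 + i^6*d^8 + (14)*i^6*c^4*d^4 + i^6*c^8) * h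

private lemma key2 (i a b c d : ℂ) (h : i^2 = -1) :
    ((-a - i * b - i * c - d) / 2)^8 + ((i * a + b - c - i * d) / 2)^8 + ((i * a - b + c - i * d) / 2)^8 + ((a - i * b - i * c + d) / 2)^8 + 14*(((-a - i * b - i * c - d) / 2)^4*((i * a + b - c - i * d) / 2)^4 + ((-a - i * b - i * c - d) / 2)^4*((i * a - b + c - i * d) / 2)^4 + ((-a - i * b - i * c - d) / 2)^4*((a - i * b - i * c + d) / 2)^4 + ((i * a + b - c - i * d) / 2)^4*((i * a - b + c - i * d) / 2)^4 + ((i * a + b - c - i * d) / 2)^4*((a - i * b - i * c + d) / 2)^4 + ((i * a - b + c - i * d) / 2)^4*((a - i * b - i * c + d) / 2)^4) + 168*(((-a - i * b - i * c - d) / 2)^2*((i * a + b - c - i * d) / 2)^2*((i * a - b + c - i * d) / 2)^2*((a - i * b - i * c + d) / 2)^2) = (a)^8 + (b)^8 + (c)^8 + (d)^8 + 14*((a)^4*(b)^4 + (a)^4*(c)^4 + (a)^4*(d)^4 + (b)^4*(c)^4 + (b)^4*(d)^4 + (c)^4*(d)^4) + 168*((a)^2*(b)^2*(c)^2*(d)^2)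 := by
  linear_combination (((-240)*d^8 + (-3360)*c^4*d^4 + (-240)*c^8 + (-896)*b*c^3*d^4 + (-128)*b*c^7 + (1344)*b^2*c^2*d^4 + (448)*b^2*c^6 + (-896)*b^3*c*d^4 + (-896)*b^3*c^5 + (-3360)*b^4*d^4 + (-2464)*b^4*c^4 + (-896)*b^5*c^3 + (448)*b^6*c^2 + (-128)*b^7*c + (-240)*b^8 + (128)*a*d^7 + (896)*a*c^4*d^3 + (-3584)*a*b*c^3*d^3 + (5376)*a*b^2*c^2*d^3 + (-3584)*a*b^3*c*d^3 + (896)*a*b^4*d^3 + (448)*a^2*d^6 + (1344)*a^2*c^4*d^2 + (-5376)*a^2*b*c^3*d^2 + (-34944)*a^2*b^2*c^2*d^2 + (-5376)*a^2*b^3*c*d^2 + (1344)*a^2*b^4*d^2 + (896)*a^3*d^5 + (896)*a^3*c^4*d + (-3584)*a^3*b*c^3*d + (5376)*a^3*b^2*c^2*d + (-3584)*a^3*b^3*c*d + (896)*a^3*b^4*d + (-2464)*a^4*d^4 + (-3360)*a^4*c^4 + (-896)*a^4*b*c^3 + (1344)*a^4*b^2*c^2 + (-896)*a^4*b^3*c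 + (-3360)*a^4*b^4 + (896)*a^5*d^3 + (448)*a^6*d^2 + (128)*a^7*d + (-240)*a^8 + (240)*i^2*d^8 + (3360)*i^2*c^4*d^4 + (240)*i^2*c^8 + (896)*i^2*b*c^3*d^4 + (128)*i^2*b*c^7 + (-1344)*i^2*b^2*c^2*d^4 + (-448)*i^2*b^2*c^6 + (896)*i^2*b^3*c*d^4 + (896)*i^2*b^3*c^5 + (3360)*i^2*b^4*d^4 + (2464)*i^2*b^4*c^4 + (896)*i^2*b^5*c^3 + (-448)*i^2*b^6*c^2 + (128)*i^2*b^7*c + (240)*i^2*b^8 + (-128)*i^2*a*d^7 + (-896)*i^2*a*c^4*d^3 + (3584)*i^2*a*b*c^3*d^3 + (-5376)*i^2*a*b^2*c^2*d^3 + (3584)*i^2*a*b^3*c*d^3 + (-896)*i^2*a*b^4*d^3 + (-448)*i^2*a^2*d^6 + (-1344)*i^2*a^2*c^4*d^2 + (5376)*i^2*a^2*b*c^3*d^2 + (34944)*i^2*a^2*b^2*c^2*d^2 + (5376)*i^2*a^2*b^3*c*d^2 + (-1344)*i^2*a^2*b^4*d^2 + (-896)*i^2*a^3*d^5 + (-896)*i^2*a^3*c^4*d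 + (3584)*i^2*a^3*b*c^3*d + (-5376)*i^2*a^3*b^2*c^2*d + (3584)*i^2*a^3*b^3*c*d + (-896)*i^2*a^3*b^4*d + (2464)*i^2*a^4*d^4 + (3360)*i^2*a^4*c^4 + (896)*i^2*a^4*b*c^3 + (-1344)*i^2*a^4*b^2*c^2 + (896)*i^2*a^4*b^3*c + (3360)*i^2*a^4*b^4 + (-896)*i^2*a^5*d^3 + (-448)*i^2*a^6*d^2 + (-128)*i^2*a^7*d + (240)*i^2*a^8 + (-16)*i^4*d^8 + (-224)*i^4*c^4*d^4 + (-16)*i^4*c^8 + (-896)*i^4*b*c^3*d^4 + (-128)*i^4*b*c^7 + (-1344)*i^4*b^2*c^2*d^4 + (-448)*i^4*b^2*c^6 + (-896)*i^4*b^3*c*d^4 + (-896)*i^4*b^3*c^5 + (-224)*i^4*b^4*d^4 + (-1120)*i^4*b^4*c^4 + (-896)*i^4*b^5*c^3 + (-448)*i^4*b^6*c^2 + (-128)*i^4*b^7*c + (-16)*i^4*b^8 + (128)*i^4*a*d^7 + (896)*i^4*a*c^4*d^3 + (3584)*i^4*a*b*c^3*d^3 + (5376)*i^4*a*b^2*c^2*d^3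 + (3584)*i^4*a*b^3*c*d^3 + (896)*i^4*a*b^4*d^3 + (-448)*i^4*a^2*d^6 + (-1344)*i^4*a^2*c^4*d^2 + (-5376)*i^4*a^2*b*c^3*d^2 + (-8064)*i^4*a^2*b^2*c^2*d^2 + (-5376)*i^4*a^2*b^3*c*d^2 + (-1344)*i^4*a^2*b^4*d^2 + (896)*i^4*a^3*d^5 + (896)*i^4*a^3*c^4*d + (3584)*i^4*a^3*b*c^3*d + (5376)*i^4*a^3*b^2*c^2*d + (3584)*i^4*a^3*b^3*c*d + (896)*i^4*a^3*b^4*d + (-1120)*i^4*a^4*d^4 + (-224)*i^4*a^4*c^4 + (-896)*i^4*a^4*b*c^3 + (-1344)*i^4*a^4*b^2*c^2 + (-896)*i^4*a^4*b^3*c + (-224)*i^4*a^4*b^4 + (896)*i^4*a^5*d^3 + (-448)*i^4*a^6*d^2 + (128)*i^4*a^7*d + (-16)*i^4*a^8 + (16)*i^6*d^8 + (224)*i^6*c^4*d^4 + (16)*i^6*c^8 + (896)*i^6*b*c^3*d^4 + (128)*i^6*b*c^7 + (1344)*i^6*b^2*c^2*d^4 + (448)*i^6*b^2*c^6 + (896)*i^6*b^3*c*d^4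 + (896)*i^6*b^3*c^5 + (224)*i^6*b^4*d^4 + (1120)*i^6*b^4*c^4 + (896)*i^6*b^5*c^3 + (448)*i^6*b^6*c^2 + (128)*i^6*b^7*c + (16)*i^6*b^8 + (-128)*i^6*a*d^7 + (-896)*i^6*a*c^4*d^3 + (-3584)*i^6*a*b*c^3*d^3 + (-5376)*i^6*a*b^2*c^2*d^3 + (-3584)*i^6*a*b^3*c*d^3 + (-896)*i^6*a*b^4*d^3 + (448)*i^6*a^2*d^6 + (1344)*i^6*a^2*c^4*d^2 + (5376)*i^6*a^2*b*c^3*d^2 + (8064)*i^6*a^2*b^2*c^2*d^2 + (5376)*i^6*a^2*b^3*c*d^2 + (1344)*i^6*a^2*b^4*d^2 + (-896)*i^6*a^3*d^5 + (-896)*i^6*a^3*c^4*d + (-3584)*i^6*a^3*b*c^3*d + (-5376)*i^6*a^3*b^2*c^2*d + (-3584)*i^6*a^3*b^3*c*d + (-896)*i^6*a^3*b^4*d + (1120)*i^6*a^4*d^4 + (224)*i^6*a^4*c^4 + (896)*i^6*a^4*b*c^3 + (1344)*i^6*a^4*b^2*c^2 + (896)*i^6*a^4*b^3*c + (224)*i^6*a^4*b^4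 + (-896)*i^6*a^5*d^3 + (448)*i^6*a^6*d^2 + (-128)*i^6*a^7*d + (16)*i^6*a^8) * h) / 256

/-- Maschke's octic polynomial `F` is invariant under the group `G` generated by `g₁`
and `g₂`: for every `g ∈ G` and every `v ∈ ℂ⁴`, `F(g·v) = F(v)`. -/
theorem maschke_octic_invariant :
    ∀ g ∈ Subgroup.closure ({g1, g2} : Set (GL (Fin 4) ℂ)),
      ∀ v : Fin 4 → ℂ, F (Matrix.mulVec (g : Matrix (Fin 4) (Fin 4) ℂ) v) = F v := by
  intro g hg
  induction hg using Subgroup.closure_induction with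
  | mem x hx =>
    rcases hx with h | h
    · subst h
      intro v
      show F (M1.mulVec v) = F v
      have hv : M1.mulVec v =
          ![v 0, v 1, Complex.I * v 2, Complex.I * v 3] := by
        funext j
        fin_cases j <;>
          simp [M1, Matrix.mulVec, dotProduct, Fin.sum_univ_four]
      rw [hv]
      simp only [F, Matrix.cons_val_zero, Matrix.cons_val_one, Matrix.head_cons,
        Matrix.cons_val_two, Matrix.tail_cons, Matrix.cons_val_three]
      exact key1 Complex.I (v 0) (v 1) (v 2) (v 3) Complex.I_sq
    · subst h
      intro v
      show F (M2.mulVec v) = F v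
      have hv : M2.mulVec v =
          ![(-v 0 - Complex.I * v 1 - Complex.I * v 2 - v 3) / 2,
            (Complex.I * v 0 + v 1 - v 2 - Complex.I * v 3) / 2,
            (Complex.I * v 0 - v 1 + v 2 - Complex.I * v 3) / 2,
            (v 0 - Complex.I * v 1 - Complex.I * v 2 + v 3) / 2] := by
        funext j
        fin_cases j <;>
          simp [M2, Matrix.mulVec, dotProduct, Fin.sum_univ_four] <;> ring
      rw [hv]
      simp only [F, Matrix.cons_val_zero, Matrix.cons_val_one, Matrix.head_cons,
        Matrix.cons_val_two, Matrix.tail_cons, Matrix.cons_val_three]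
      exact key2 Complex.I (v 0) (v 1) (v 2) (v 3) Complex.I_sq
  | one =>
    intro v
    simp
  | mul x y hx hy ihx ihy =>
    intro v
    rw [Units.val_mul, ← Matrix.mulVec_mulVec]
    rw [ihx, ihy]
  | inv x hx ih =>
    intro v
    have h2 := ih ((↑x⁻¹ : Matrix (Fin 4) (Fin 4) ℂ).mulVec v)
    rw [Matrix.mulVec_mulVec, ← Units.val_mul, mul_inv_cancel, Units.val_one,
      Matrix.one_mulVec] at h2
    exact h2.symm
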